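/- Let 0 < p < 1 and for |ζ| < 1 define H(ζ) = (1 − (1−p)ζ)^p (1 + pζ)^{1−p} − 1, using principal branches of the complex powers. Then |H(ζ)| ≤ (p(1−p)/2) · |ζ|²/(1 − |ζ|) for all ζ with |ζ| < 1. -/

import Mathlib

open Complex Set Metric

noncomputable section

lemma slit_aux (c w : ℂ) (h : ‖c * w‖ < 1) : (1 + c * w) ∈ Complex.slitPlane := by
  refine Or.inl ?_
  have h1 : |(c*w).re| ≤ ‖c*w‖ := Complex.abs_re_le_norm _
  have h2 : (1 + c*w).re = 1 + (c*w).re := by simp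
  rw [h2]
  have := neg_abs_le (c*w).re
  linarith

lemma Hderiv (p : ℝ) (hp0 : 0 < p) (hp1 : p < 1) (w : ℂ) (hw : ‖w‖ < 1) :
    HasDerivAt (fun z : ℂ => (1 - (1 - (p:ℂ)) * z) ^ (p:ℂ) * (1 + (p:ℂ) * z) ^ (1 - (p:ℂ)) - 1)
      (-((p * (1 - p) : ℝ) : ℂ) * w * (1 - (1 - (p:ℂ)) * w) ^ ((p:ℂ) - 1)
        * (1 + (p:ℂ) * w) ^ (-(p:ℂ))) w := by
  have habs1 : ‖(1 - (p:ℂ)) * w‖ < 1 := by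
    rw [norm_mul]
    have h1 : ‖1 - (p:ℂ)‖ = 1 - p := by
      rw [show (1 - (p:ℂ)) = ((1 - p : ℝ) : ℂ) by push_cast; ring, Complex.norm_real, Real.norm_eq_abs,
        _root_.abs_of_nonneg (by linarith)]
    rw [h1]
    nlinarith [norm_nonneg w]
  have habs2 : ‖(p:ℂ) * w‖ < 1 := by
    rw [norm_mul, Complex.norm_real, Real.norm_eq_abs, _root_.abs_of_nonneg hp0.le]
    nlinarith [norm_nonneg w]
  have hA : (1 - (1 - (p:ℂ)) * w) ∈ Complex.slitPlane := by
    have := slit_aux (-(1 - (p:ℂ))) w (by rwa [neg_mul, norm_neg])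
    rwa [neg_mul, ← sub_eq_add_neg] at this
  have hB : (1 + (p:ℂ) * w) ∈ Complex.slitPlane := slit_aux _ _ habs2
  have hA0 : (1 - (1 - (p:ℂ)) * w) ≠ 0 := Complex.slitPlane_ne_zero hA
  have hB0 : (1 + (p:ℂ) * w) ≠ 0 := Complex.slitPlane_ne_zero hB
  have d1 : HasDerivAt (fun z : ℂ => (1 - (1 - (p:ℂ)) * z) ^ (p:ℂ))
      ((p:ℂ) * (1 - (1 - (p:ℂ)) * w) ^ ((p:ℂ) - 1) * (-(1 - (p:ℂ)))) w := by
    have h := HasDerivAt.cpow_const (c := (p:ℂ))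
      (((hasDerivAt_id w).const_mul (1 - (p:ℂ))).const_sub 1) hA
    simpa using h
  have d2 : HasDerivAt (fun z : ℂ => (1 + (p:ℂ) * z) ^ (1 - (p:ℂ)))
      ((1 - (p:ℂ)) * (1 + (p:ℂ) * w) ^ (1 - (p:ℂ) - 1) * (p:ℂ)) w := by
    have h := HasDerivAt.cpow_const (c := 1 - (p:ℂ))
      (((hasDerivAt_id w).const_mul (p:ℂ)).const_add 1) hB
    simpa using h
  have d := (d1.mul d2).sub_const 1
  refine d.congr_deriv ?_
  have eA : (1 - (1 - (p:ℂ)) * w) ^ (p:ℂ)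
      = (1 - (1 - (p:ℂ)) * w) ^ ((p:ℂ) - 1) * (1 - (1 - (p:ℂ)) * w) := by
    have h := Complex.cpow_add ((p:ℂ) - 1) 1 hA0
    rw [Complex.cpow_one] at h
    have h2 : (p:ℂ) - 1 + 1 = (p:ℂ) := by ring
    rw [h2] at h
    exact h
  have eB : (1 + (p:ℂ) * w) ^ (1 - (p:ℂ))
      = (1 + (p:ℂ) * w) ^ (-(p:ℂ)) * (1 + (p:ℂ) * w) := by
    have h := Complex.cpow_add (-(p:ℂ)) 1 hB0
    rw [Complex.cpow_one] at h
    have h2 : -(p:ℂ) + 1 = 1 - (p:ℂ) := by ring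
    rw [h2] at h
    exact h
  have eB2 : (1 - (p:ℂ) - 1) = -(p:ℂ) := by ring
  rw [eA, eB, eB2]
  push_cast
  ring

/-- For `0 < p < 1` and `|ζ| < 1`, the function
`H(ζ) = (1 − (1−p)ζ)^p (1 + pζ)^{1−p} − 1` (principal branches) satisfies
`|H(ζ)| ≤ (p(1−p)/2)·|ζ|²/(1−|ζ|)`. -/
theorem H_estimate (p : ℝ) (hp0 : 0 < p) (hp1 : p < 1) (ζ : ℂ) (hζ : ‖ζ‖ < 1) :
    ‖(1 - (1 - (p : ℂ)) * ζ) ^ (p : ℂ) * (1 + (p : ℂ) * ζ) ^ (1 - (p : ℂ)) - 1‖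
      ≤ p * (1 - p) / 2 * ‖ζ‖ ^ 2 / (1 - ‖ζ‖) := by
  set r := ‖ζ‖ with hrdef
  have hr0 : 0 ≤ r := norm_nonneg ζ
  have hr1 : (0:ℝ) < 1 - r := by linarith
  set F : ℝ → ℂ := fun t =>
    (1 - (1 - (p:ℂ)) * ((t:ℂ) * ζ)) ^ (p:ℂ) * (1 + (p:ℂ) * ((t:ℂ) * ζ)) ^ (1 - (p:ℂ)) - 1
    with hF
  set F' : ℝ → ℂ := fun t =>
    (-((p * (1 - p) : ℝ) : ℂ) * ((t:ℂ) * ζ) * (1 - (1 - (p:ℂ)) * ((t:ℂ) * ζ)) ^ ((p:ℂ) - 1)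
        * (1 + (p:ℂ) * ((t:ℂ) * ζ)) ^ (-(p:ℂ))) * ζ with hF'
  have habsw : ∀ t : ℝ, t ∈ Set.Icc (0:ℝ) 1 → ‖(t:ℂ) * ζ‖ < 1 := by
    intro t ht
    rw [norm_mul, Complex.norm_real, Real.norm_eq_abs, _root_.abs_of_nonneg ht.1]
    nlinarith [ht.2]
  have hderiv : ∀ t ∈ Set.uIcc (0:ℝ) 1, HasDerivAt F (F' t) t := by
    intro t ht
    rw [Set.uIcc_of_le (by norm_num : (0:ℝ) ≤ 1)] at ht
    have hΦ := Hderiv p hp0 hp1 ((t:ℂ) * ζ) (habsw t ht)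
    have hc : HasDerivAt (fun z : ℂ => z * ζ) ζ (t:ℂ) := by
      simpa using (hasDerivAt_id (t:ℂ)).mul_const ζ
    exact (hΦ.comp (t:ℂ) hc).comp_ofReal
  have hcont : ContinuousOn F' (Set.uIcc (0:ℝ) 1) := by
    rw [Set.uIcc_of_le (by norm_num : (0:ℝ) ≤ 1)]
    intro t ht
    have hw := habsw t ht
    have habs1 : ‖(1 - (p:ℂ)) * ((t:ℂ) * ζ)‖ < 1 := by
      rw [norm_mul]
      have h1 : ‖1 - (p:ℂ)‖ = 1 - p := by
        rw [show (1 - (p:ℂ)) = ((1 - p : ℝ) : ℂ) by push_cast; ring, Complex.norm_real, Real.norm_eq_abs,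
          _root_.abs_of_nonneg (by linarith)]
      rw [h1]
      nlinarith [norm_nonneg ((t:ℂ) * ζ)]
    have habs2 : ‖(p:ℂ) * ((t:ℂ) * ζ)‖ < 1 := by
      rw [norm_mul, Complex.norm_real, Real.norm_eq_abs, _root_.abs_of_nonneg hp0.le]
      nlinarith [norm_nonneg ((t:ℂ) * ζ)]
    have hA : (1 - (1 - (p:ℂ)) * ((t:ℂ) * ζ)) ∈ Complex.slitPlane := by
      have := slit_aux (-(1 - (p:ℂ))) ((t:ℂ) * ζ) (by rwa [neg_mul, norm_neg])
      rwa [neg_mul, ← sub_eq_add_neg] at this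
    have hB : (1 + (p:ℂ) * ((t:ℂ) * ζ)) ∈ Complex.slitPlane := slit_aux _ _ habs2
    have hbase : Continuous fun s : ℝ => (s:ℂ) * ζ := by continuity
    have hb1 : ContinuousAt (fun s : ℝ => 1 - (1 - (p:ℂ)) * ((s:ℂ) * ζ)) t :=
      (continuous_const.sub (continuous_const.mul hbase)).continuousAt
    have hb2 : ContinuousAt (fun s : ℝ => 1 + (p:ℂ) * ((s:ℂ) * ζ)) t :=
      (continuous_const.add (continuous_const.mul hbase)).continuousAt
    have c1 : ContinuousAt (fun s : ℝ => (1 - (1 - (p:ℂ)) * ((s:ℂ) * ζ)) ^ ((p:ℂ) - 1)) t :=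
      hb1.cpow continuousAt_const hA
    have c2 : ContinuousAt (fun s : ℝ => (1 + (p:ℂ) * ((s:ℂ) * ζ)) ^ (-(p:ℂ))) t :=
      hb2.cpow continuousAt_const hB
    exact ((((continuousAt_const.mul hbase.continuousAt).mul c1).mul c2).mul
      continuousAt_const).continuousWithinAt
  have hint : IntervalIntegrable F' MeasureTheory.volume 0 1 := hcont.intervalIntegrable
  have hftc : ∫ t in (0:ℝ)..1, F' t = F 1 - F 0 :=
    intervalIntegral.integral_eq_sub_of_hasDerivAt hderiv hint
  have hF0 : F 0 = 0 := by simp [hF]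
  have hF1 : F 1 = (1 - (1 - (p:ℂ)) * ζ) ^ (p:ℂ) * (1 + (p:ℂ) * ζ) ^ (1 - (p:ℂ)) - 1 := by
    simp [hF]
  set C : ℝ := p * (1 - p) * r ^ 2 / (1 - r) with hC
  have hbound : ∀ t ∈ Set.Ioc (0:ℝ) 1, ‖F' t‖ ≤ C * t := by
    intro t ht
    have ht' : t ∈ Set.Icc (0:ℝ) 1 := ⟨ht.1.le, ht.2⟩
    have hAabs : 1 - r ≤ ‖1 - (1 - (p:ℂ)) * ((t:ℂ) * ζ)‖ := by
      have h1 : ‖(1 - (p:ℂ)) * ((t:ℂ) * ζ)‖ ≤ r := by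
        rw [norm_mul, norm_mul, Complex.norm_real, Real.norm_eq_abs, _root_.abs_of_nonneg ht'.1]
        have h2 : ‖1 - (p:ℂ)‖ = 1 - p := by
          rw [show (1 - (p:ℂ)) = ((1 - p : ℝ) : ℂ) by push_cast; ring, Complex.norm_real, Real.norm_eq_abs,
            _root_.abs_of_nonneg (by linarith)]
        rw [h2]
        have h4 : t * ‖ζ‖ ≤ r := by
          nlinarith [mul_le_mul_of_nonneg_right ht'.2 hr0]
        nlinarith [h4, mul_nonneg hp0.le (mul_nonneg ht'.1 hr0)]
      calc 1 - r ≤ ‖(1:ℂ)‖ - ‖(1 - (p:ℂ)) * ((t:ℂ) * ζ)‖ := by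
            simp only [norm_one]; linarith
        _ ≤ ‖(1:ℂ) - (1 - (p:ℂ)) * ((t:ℂ) * ζ)‖ := norm_sub_norm_le _ _
    have hBabs : 1 - r ≤ ‖1 + (p:ℂ) * ((t:ℂ) * ζ)‖ := by
      have h1 : ‖(p:ℂ) * ((t:ℂ) * ζ)‖ ≤ r := by
        rw [norm_mul, norm_mul, Complex.norm_real, Real.norm_eq_abs, Complex.norm_real, Real.norm_eq_abs,
          _root_.abs_of_nonneg ht'.1, _root_.abs_of_nonneg hp0.le]
        have h4 : t * ‖ζ‖ ≤ r := by
          nlinarith [mul_le_mul_of_nonneg_right ht'.2 hr0]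
        nlinarith [h4, mul_nonneg (by linarith : (0:ℝ) ≤ 1 - p) (mul_nonneg ht'.1 hr0)]
      calc 1 - r ≤ ‖(1:ℂ)‖ - ‖-((p:ℂ) * ((t:ℂ) * ζ))‖ := by
            simp only [norm_one, norm_neg]; linarith
        _ ≤ ‖(1:ℂ) - -((p:ℂ) * ((t:ℂ) * ζ))‖ := norm_sub_norm_le _ _
        _ = ‖1 + (p:ℂ) * ((t:ℂ) * ζ)‖ := by rw [sub_neg_eq_add]
    have e1 : ‖(1 - (1 - (p:ℂ)) * ((t:ℂ) * ζ)) ^ ((p:ℂ) - 1)‖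
        ≤ (1 - r) ^ (p - 1 : ℝ) := by
      calc ‖(1 - (1 - (p:ℂ)) * ((t:ℂ) * ζ)) ^ ((p:ℂ) - 1)‖
          ≤ ‖1 - (1 - (p:ℂ)) * ((t:ℂ) * ζ)‖ ^ ((p:ℂ) - 1).re /
              Real.exp (Complex.arg (1 - (1 - (p:ℂ)) * ((t:ℂ) * ζ)) * ((p:ℂ) - 1).im) :=
            Complex.norm_cpow_le _ _
        _ = ‖1 - (1 - (p:ℂ)) * ((t:ℂ) * ζ)‖ ^ (p - 1 : ℝ) := by
            simp
        _ ≤ (1 - r) ^ (p - 1 : ℝ) :=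
            Real.rpow_le_rpow_of_nonpos hr1 hAabs (by linarith)
    have e2 : ‖(1 + (p:ℂ) * ((t:ℂ) * ζ)) ^ (-(p:ℂ))‖
        ≤ (1 - r) ^ (-p : ℝ) := by
      calc ‖(1 + (p:ℂ) * ((t:ℂ) * ζ)) ^ (-(p:ℂ))‖
          ≤ ‖1 + (p:ℂ) * ((t:ℂ) * ζ)‖ ^ (-(p:ℂ)).re /
              Real.exp (Complex.arg (1 + (p:ℂ) * ((t:ℂ) * ζ)) * (-(p:ℂ)).im) :=
            Complex.norm_cpow_le _ _
        _ = ‖1 + (p:ℂ) * ((t:ℂ) * ζ)‖ ^ (-p : ℝ) := by simp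
        _ ≤ (1 - r) ^ (-p : ℝ) :=
            Real.rpow_le_rpow_of_nonpos hr1 hBabs (by linarith)
    have e0 : ‖F' t‖ = (p * (1 - p)) * (t * r)
        * ‖(1 - (1 - (p:ℂ)) * ((t:ℂ) * ζ)) ^ ((p:ℂ) - 1)‖
        * ‖(1 + (p:ℂ) * ((t:ℂ) * ζ)) ^ (-(p:ℂ))‖ * r := by
      simp only [hF', norm_mul, norm_neg, Complex.norm_real, Real.norm_eq_abs]
      rw [_root_.abs_of_nonneg hp0.le, _root_.abs_of_nonneg (by linarith : (0:ℝ) ≤ 1 - p),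
        _root_.abs_of_nonneg ht'.1, ← hrdef]
      try ring
    have step : ‖F' t‖ ≤ (p * (1 - p)) * (t * r)
        * ((1 - r) ^ (p - 1 : ℝ)) * ((1 - r) ^ (-p : ℝ)) * r := by
      rw [e0]
      have hpp : (0:ℝ) ≤ p * (1 - p) * (t * r) := by
        have : (0:ℝ) ≤ p * (1 - p) := mul_nonneg hp0.le (by linarith)
        have := mul_nonneg ht'.1 hr0
        nlinarith
      have hM1 : (0:ℝ) ≤ (1 - r) ^ (p - 1 : ℝ) := Real.rpow_nonneg hr1.le _
      refine mul_le_mul_of_nonneg_right ?_ hr0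
      calc p * (1 - p) * (t * r) * ‖(1 - (1 - (p:ℂ)) * ((t:ℂ) * ζ)) ^ ((p:ℂ) - 1)‖
            * ‖(1 + (p:ℂ) * ((t:ℂ) * ζ)) ^ (-(p:ℂ))‖
          ≤ p * (1 - p) * (t * r) * ((1 - r) ^ (p - 1 : ℝ))
            * ‖(1 + (p:ℂ) * ((t:ℂ) * ζ)) ^ (-(p:ℂ))‖ :=
            mul_le_mul_of_nonneg_right (mul_le_mul_of_nonneg_left e1 hpp)
              (norm_nonneg _)
        _ ≤ p * (1 - p) * (t * r) * ((1 - r) ^ (p - 1 : ℝ)) * ((1 - r) ^ (-p : ℝ)) :=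
            mul_le_mul_of_nonneg_left e2 (mul_nonneg hpp hM1)
    have hprod : (1 - r) ^ (p - 1 : ℝ) * (1 - r) ^ (-p : ℝ) = (1 - r)⁻¹ := by
      rw [← Real.rpow_add hr1, show (p - 1) + (-p) = (-1 : ℝ) by ring, Real.rpow_neg_one]
    calc ‖F' t‖ ≤ (p * (1 - p)) * (t * r)
          * ((1 - r) ^ (p - 1 : ℝ)) * ((1 - r) ^ (-p : ℝ)) * r := step
      _ = (p * (1 - p)) * (t * r) * ((1 - r) ^ (p - 1 : ℝ) * (1 - r) ^ (-p : ℝ)) * r := by ring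
      _ = (p * (1 - p)) * (t * r) * (1 - r)⁻¹ * r := by rw [hprod]
      _ = C * t := by rw [hC]; field_simp
  have hgc : Continuous (fun t : ℝ => C * t) := continuous_const.mul continuous_id
  have hgi : IntervalIntegrable (fun t : ℝ => C * t) MeasureTheory.volume 0 1 :=
    hgc.intervalIntegrable 0 1
  have hC0 : 0 ≤ C := by
    rw [hC]
    have h1 : (0:ℝ) ≤ p * (1 - p) * r ^ 2 :=
      mul_nonneg (mul_nonneg hp0.le (by linarith)) (sq_nonneg r)
    positivity
  have hmain : ‖∫ t in (0:ℝ)..1, F' t‖ ≤ |∫ t in (0:ℝ)..1, C * t| := by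
    refine (intervalIntegral.norm_integral_le_of_norm_le (by norm_num) ?_ hgi).trans (le_abs_self _)
    exact Filter.Eventually.of_forall hbound
  have hval : ∫ t in (0:ℝ)..1, C * t = C / 2 := by
    rw [intervalIntegral.integral_const_mul, integral_id]
    ring
  calc ‖(1 - (1 - (p:ℂ)) * ζ) ^ (p:ℂ) * (1 + (p:ℂ) * ζ) ^ (1 - (p:ℂ)) - 1‖
      = ‖∫ t in (0:ℝ)..1, F' t‖ := by
        rw [hftc, hF0, sub_zero, hF1]
    _ ≤ |∫ t in (0:ℝ)..1, C * t| := hmain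
    _ = C / 2 := by rw [hval, _root_.abs_of_nonneg (by linarith : (0:ℝ) ≤ C / 2)]
    _ = p * (1 - p) / 2 * r ^ 2 / (1 - r) := by rw [hC]; ring
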